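/- (Polyak–Łojasiewicz inequality for the barycenter functional.) Let 0 < λ_min ≤ λ_max < ∞, κ := λ_max/λ_min, and suppose Σ₁, …, Σ_N ∈ 𝒦_{λ_min,λ_max}. Let Σ⋆ be a minimizer of the barycenter functional F over all d×d symmetric positive definite matrices. Then for every Σ ∈ 𝒦_{λ_min,λ_max}, F(Σ) − F(Σ⋆) ≤ 2 κ^{3/2} · ‖∇F(Σ)‖_Σ². -/

import Mathlib

open Matrix
open scoped Classical

/-- Symmetric PSD square root of a positive semidefinite matrix (junk value `0` otherwise). -/
noncomputable def msqrt {d : ℕ} (M : Matrix (Fin d) (Fin d) ℝ) : Matrix (Fin d) (Fin d) ℝ :=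
  if h : M.PosSemidef then
    (h.1.eigenvectorUnitary : Matrix (Fin d) (Fin d) ℝ) * diagonal (Real.sqrt ∘ h.1.eigenvalues) *
      (star h.1.eigenvectorUnitary : Matrix (Fin d) (Fin d) ℝ)
  else 0

/-- Optimal transport map `T_{A→B} = A^{-1/2} (A^{1/2} B A^{1/2})^{1/2} A^{-1/2}`. -/
noncomputable def Tmap {d : ℕ} (A B : Matrix (Fin d) (Fin d) ℝ) : Matrix (Fin d) (Fin d) ℝ :=
  (msqrt A)⁻¹ * msqrt (msqrt A * B * msqrt A) * (msqrt A)⁻¹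

/-- Squared Bures–Wasserstein distance `tr(A + B - 2 (A^{1/2} B A^{1/2})^{1/2})`. -/
noncomputable def W2sq {d : ℕ} (A B : Matrix (Fin d) (Fin d) ℝ) : ℝ :=
  (A + B - (2 : ℝ) • msqrt (msqrt A * B * msqrt A)).trace

/-- Bures–Wasserstein distance. -/
noncomputable def W2 {d : ℕ} (A B : Matrix (Fin d) (Fin d) ℝ) : ℝ :=
  Real.sqrt (W2sq A B)

/-- Smallest eigenvalue of a (hermitian) matrix. -/
noncomputable def lamMin {d : ℕ} (M : Matrix (Fin d) (Fin d) ℝ) : ℝ :=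
  if h : M.IsHermitian then ⨅ i, h.eigenvalues i else 0

/-- Largest eigenvalue of a (hermitian) matrix. -/
noncomputable def lamMax {d : ℕ} (M : Matrix (Fin d) (Fin d) ℝ) : ℝ :=
  if h : M.IsHermitian then ⨆ i, h.eigenvalues i else 0

/-- `Kset a b` : symmetric positive definite matrices with all eigenvalues in `[a, b]`,
expressed via the Loewner order `a • I ⪯ S ⪯ b • I`. -/
def Kset {d : ℕ} (a b : ℝ) : Set (Matrix (Fin d) (Fin d) ℝ) :=
  {S | S.PosDef ∧ (S - a • (1 : Matrix (Fin d) (Fin d) ℝ)).PosSemidef ∧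
    (b • (1 : Matrix (Fin d) (Fin d) ℝ) - S).PosSemidef}

/-- Barycenter functional `F(S) = (1/(2N)) ∑ᵢ W₂²(S, Σᵢ)`. -/
noncomputable def Fbar {d N : ℕ} (Ss : Fin N → Matrix (Fin d) (Fin d) ℝ)
    (S : Matrix (Fin d) (Fin d) ℝ) : ℝ :=
  (1 / (2 * (N : ℝ))) * ∑ i, W2sq S (Ss i)

/-- Bures–Wasserstein gradient of the barycenter functional: `I - (1/N) ∑ᵢ T_{S→Σᵢ}`. -/
noncomputable def gradF {d N : ℕ} (Ss : Fin N → Matrix (Fin d) (Fin d) ℝ)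
    (S : Matrix (Fin d) (Fin d) ℝ) : Matrix (Fin d) (Fin d) ℝ :=
  1 - (N : ℝ)⁻¹ • ∑ i, Tmap S (Ss i)

/-- `‖A‖_S² = tr(A S A)`. -/
noncomputable def normAtSq {d : ℕ} (A S : Matrix (Fin d) (Fin d) ℝ) : ℝ :=
  (A * S * A).trace

section PLaux
variable {d : ℕ}

local notation "Mat" => Matrix (Fin d) (Fin d) ℝ

lemma msqrt_eq {M : Mat} (h : M.PosSemidef) : msqrt M =
    (h.1.eigenvectorUnitary : Mat) * diagonal (Real.sqrt ∘ h.1.eigenvalues) *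
      (star h.1.eigenvectorUnitary : Mat) := dif_pos h

lemma msqrt_posSemidef {M : Mat} (h : M.PosSemidef) : (msqrt M).PosSemidef := by
  rw [msqrt_eq h]
  have := (PosSemidef.diagonal (fun i => Real.sqrt_nonneg _) :
    (diagonal (Real.sqrt ∘ h.1.eigenvalues)).PosSemidef).mul_mul_conjTranspose_same
      (h.1.eigenvectorUnitary : Mat)
  simpa only [Unitary.coe_star, star_eq_conjTranspose] using this

lemma msqrt_mul_self {M : Mat} (h : M.PosSemidef) : msqrt M * msqrt M = M := by
  rw [msqrt_eq h]
  have hU : star (h.1.eigenvectorUnitary : Mat) * (h.1.eigenvectorUnitary : Mat) = 1 :=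
    Unitary.coe_star_mul_self _
  have hD : diagonal (Real.sqrt ∘ h.1.eigenvalues) * diagonal (Real.sqrt ∘ h.1.eigenvalues)
      = diagonal h.1.eigenvalues := by
    rw [diagonal_mul_diagonal]
    congr 1
    funext i
    exact Real.mul_self_sqrt (h.eigenvalues_nonneg i)
  calc (h.1.eigenvectorUnitary : Mat) * diagonal (Real.sqrt ∘ h.1.eigenvalues) *
        star (h.1.eigenvectorUnitary : Mat) * ((h.1.eigenvectorUnitary : Mat) *
        diagonal (Real.sqrt ∘ h.1.eigenvalues) * star (h.1.eigenvectorUnitary : Mat))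
      = (h.1.eigenvectorUnitary : Mat) * (diagonal (Real.sqrt ∘ h.1.eigenvalues) *
        (star (h.1.eigenvectorUnitary : Mat) * (h.1.eigenvectorUnitary : Mat)) *
        diagonal (Real.sqrt ∘ h.1.eigenvalues)) * star (h.1.eigenvectorUnitary : Mat) := by
        simp only [Matrix.mul_assoc]
    _ = M := by
        rw [hU, Matrix.mul_one, hD]
        conv_rhs => rw [h.1.spectral_theorem]
        simp [Unitary.coe_star]

lemma msqrt_herm {M : Mat} (h : M.PosSemidef) : (msqrt M)ᴴ = msqrt M :=
  (msqrt_posSemidef h).isHermitian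

/-- positive semidefinite + nonsingular implies positive definite -/
lemma posDef_of_posSemidef_det_ne_zero {M : Mat} (h : M.PosSemidef) (hdet : M.det ≠ 0) :
    M.PosDef := by
  refine posDef_iff_dotProduct_mulVec.mpr ⟨h.isHermitian, fun x hx => ?_⟩
  rcases lt_or_eq_of_le (h.dotProduct_mulVec_nonneg x) with hlt | heq
  · exact hlt
  · exfalso
    have hMx : M *ᵥ x = 0 := (h.dotProduct_mulVec_zero_iff x).mp heq.symm
    have : (M⁻¹ * M) *ᵥ x = 0 := by
      rw [← Matrix.mulVec_mulVec, hMx, Matrix.mulVec_zero]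
    rw [Matrix.nonsing_inv_mul M (isUnit_iff_ne_zero.mpr hdet), Matrix.one_mulVec] at this
    exact hx this

lemma msqrt_posDef {M : Mat} (h : M.PosDef) : (msqrt M).PosDef := by
  have hs := msqrt_posSemidef h.posSemidef
  refine posDef_of_posSemidef_det_ne_zero hs (fun hdet => ?_)
  have : M.det = 0 := by
    rw [← msqrt_mul_self h.posSemidef, Matrix.det_mul, hdet, mul_zero]
  exact h.det_pos.ne' this

lemma pd_det_isUnit {M : Mat} (h : M.PosDef) : IsUnit M.det :=
  isUnit_iff_ne_zero.mpr h.det_pos.ne'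

lemma pd_mul_inv {M : Mat} (h : M.PosDef) : M * M⁻¹ = 1 :=
  Matrix.mul_nonsing_inv M (pd_det_isUnit h)

lemma pd_inv_mul {M : Mat} (h : M.PosDef) : M⁻¹ * M = 1 :=
  Matrix.nonsing_inv_mul M (pd_det_isUnit h)

lemma pd_inv_herm {M : Mat} (h : M.PosDef) : (M⁻¹)ᴴ = M⁻¹ := by
  rw [Matrix.conjTranspose_nonsing_inv, h.isHermitian.eq]

/-- trace of `MᴴM`-type matrices written as a sum of squares -/
lemma trace_conjTranspose_mul_self (X : Mat) :
    (Xᴴ * X).trace = ∑ p : Fin d × Fin d, (X p.1 p.2) ^ 2 := by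
  have h1 : (Xᴴ * X).trace = ∑ j : Fin d, ∑ i : Fin d, (X i j)^2 := by
    simp [Matrix.trace, Matrix.diag, Matrix.mul_apply, Matrix.conjTranspose_apply, sq]
  rw [h1, Fintype.sum_prod_type, Finset.sum_comm]

lemma trace_conjTranspose_mul_self_nonneg (X : Mat) : 0 ≤ (Xᴴ * X).trace := by
  rw [trace_conjTranspose_mul_self]
  exact Finset.sum_nonneg fun p _ => sq_nonneg _

lemma eq_zero_of_trace_conjTranspose_mul_self (X : Mat) (h : (Xᴴ * X).trace ≤ 0) : X = 0 := by
  have h2 : ∀ p ∈ (Finset.univ : Finset (Fin d × Fin d)), (0:ℝ) ≤ (X p.1 p.2)^2 := fun p _ => sq_nonneg _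
  have h0 : (Xᴴ * X).trace = 0 :=
    le_antisymm h (trace_conjTranspose_mul_self_nonneg X)
  rw [trace_conjTranspose_mul_self] at h0
  have := (Finset.sum_eq_zero_iff_of_nonneg h2).mp h0
  ext i j
  have := this (i, j) (Finset.mem_univ _)
  simpa using pow_eq_zero_iff (n := 2) (by norm_num) |>.mp this

/-- Cauchy–Schwarz for the Frobenius trace inner product, squared form. -/
lemma trace_CS (X Y : Mat) :
    ((Xᴴ * Y).trace)^2 ≤ (Xᴴ * X).trace * (Yᴴ * Y).trace := by
  have h1 : (Xᴴ * Y).trace = ∑ p : Fin d × Fin d, (X p.1 p.2) * (Y p.1 p.2) := by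
    have : (Xᴴ * Y).trace = ∑ j : Fin d, ∑ i : Fin d, (X i j) * (Y i j) := by
      simp [Matrix.trace, Matrix.diag, Matrix.mul_apply, Matrix.conjTranspose_apply]
    rw [this, Fintype.sum_prod_type, Finset.sum_comm]
  rw [h1, trace_conjTranspose_mul_self, trace_conjTranspose_mul_self]
  exact Finset.sum_mul_sq_le_sq_mul_sq _ _ _

lemma trace_psd_nonneg {M : Mat} (h : M.PosSemidef) : 0 ≤ M.trace := by
  have h1 : M = (msqrt M)ᴴ * msqrt M := by
    rw [msqrt_herm h, msqrt_mul_self h]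
  rw [h1]; exact trace_conjTranspose_mul_self_nonneg _

lemma trace_mul_psd_nonneg {M N : Mat} (hM : M.PosSemidef) (hN : N.PosSemidef) :
    0 ≤ (M * N).trace := by
  have h1 : M * N = msqrt M * (msqrt M * N) := by
    rw [← Matrix.mul_assoc, msqrt_mul_self hM]
  rw [h1, Matrix.trace_mul_comm]
  have h2 : msqrt M * N * msqrt M = (msqrt M)ᴴ * N * msqrt M := by rw [msqrt_herm hM]
  rw [h2]
  exact trace_psd_nonneg (hN.conjTranspose_mul_mul_same _)

/-- the BW cross term `tr((A^{1/2} B A^{1/2})^{1/2})` -/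
noncomputable def crossBW {d : ℕ} (A B : Matrix (Fin d) (Fin d) ℝ) : ℝ :=
  (msqrt (msqrt A * B * msqrt A)).trace

lemma W2sq_expand (A B : Mat) : W2sq A B = A.trace + B.trace - 2 * crossBW A B := by
  rw [W2sq, Matrix.trace_sub, Matrix.trace_add, Matrix.trace_smul, crossBW]
  simp

lemma inner_posDef {A B : Mat} (hA : A.PosDef) (hB : B.PosDef) :
    (msqrt A * B * msqrt A).PosDef := by
  have hpsd : (msqrt A * B * msqrt A).PosSemidef := by
    have := hB.posSemidef.conjTranspose_mul_mul_same (msqrt A)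
    rwa [msqrt_herm hA.posSemidef] at this
  refine posDef_of_posSemidef_det_ne_zero hpsd ?_
  rw [Matrix.det_mul, Matrix.det_mul]
  have hsA := (msqrt_posDef hA).det_pos.ne'
  exact mul_ne_zero (mul_ne_zero hsA hB.det_pos.ne') hsA

lemma Tmap_herm {A B : Mat} (hA : A.PosDef) (hB : B.PosDef) : (Tmap A B)ᴴ = Tmap A B := by
  rw [Tmap, Matrix.conjTranspose_mul, Matrix.conjTranspose_mul,
    pd_inv_herm (msqrt_posDef hA), msqrt_herm (inner_posDef hA hB).posSemidef,
    ← Matrix.mul_assoc]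

lemma Tmap_posDef {A B : Mat} (hA : A.PosDef) (hB : B.PosDef) : (Tmap A B).PosDef := by
  have hsM := msqrt_posDef (inner_posDef hA hB)
  have hsA := msqrt_posDef hA
  have hpsd : (Tmap A B).PosSemidef := by
    rw [Tmap]
    have := hsM.posSemidef.conjTranspose_mul_mul_same (msqrt A)⁻¹
    rwa [pd_inv_herm hsA] at this
  refine posDef_of_posSemidef_det_ne_zero hpsd ?_
  rw [Tmap, Matrix.det_mul, Matrix.det_mul]
  have h1 : (msqrt A)⁻¹.det ≠ 0 := by
    rw [Matrix.det_nonsing_inv]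
    simpa using hsA.det_pos.ne'
  exact mul_ne_zero (mul_ne_zero h1 hsM.det_pos.ne') h1

private lemma gen_conj {sA sM Bm : Mat} (h1 : sA⁻¹ * sA = 1) (h2 : sA * sA⁻¹ = 1)
    (h3 : sM * sM = sA * Bm * sA) :
    (sA⁻¹ * sM * sA⁻¹) * (sA * sA) * (sA⁻¹ * sM * sA⁻¹) = Bm := by
  have e1 : ∀ X : Mat, sA⁻¹ * (sA * X) = X := fun X => by
    rw [← Matrix.mul_assoc, h1, Matrix.one_mul]
  have e1' : ∀ X : Mat, sA * (sA⁻¹ * X) = X := fun X => by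
    rw [← Matrix.mul_assoc, h2, Matrix.one_mul]
  have e3 : ∀ X : Mat, sM * (sM * X) = sA * (Bm * (sA * X)) := fun X => by
    rw [← Matrix.mul_assoc, h3, Matrix.mul_assoc, Matrix.mul_assoc]
  simp only [Matrix.mul_assoc, e1, e1', e3, h2, Matrix.mul_one]

private lemma gen_trace {sA sM : Mat} (h1 : sA⁻¹ * sA = 1) (h2 : sA * sA⁻¹ = 1) :
    ((sA * sA) * (sA⁻¹ * sM * sA⁻¹)).trace = sM.trace := by
  have e1' : ∀ X : Mat, sA * (sA⁻¹ * X) = X := fun X => by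
    rw [← Matrix.mul_assoc, h2, Matrix.one_mul]
  have h4 : (sA * sA) * (sA⁻¹ * sM * sA⁻¹) = sA * (sM * sA⁻¹) := by
    simp only [Matrix.mul_assoc, e1']
  rw [h4, Matrix.trace_mul_comm, Matrix.mul_assoc, h1, Matrix.mul_one]

lemma Tmap_conj {A B : Mat} (hA : A.PosDef) (hB : B.PosDef) : Tmap A B * A * Tmap A B = B := by
  have hsA := msqrt_posDef hA
  have key := gen_conj (sA := msqrt A) (sM := msqrt (msqrt A * B * msqrt A)) (Bm := B)
    (pd_inv_mul hsA) (pd_mul_inv hsA) (msqrt_mul_self (inner_posDef hA hB).posSemidef)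
  rw [msqrt_mul_self hA.posSemidef] at key
  simpa only [Tmap] using key

lemma Tmap_trace {A B : Mat} (hA : A.PosDef) (hB : B.PosDef) :
    (A * Tmap A B).trace = crossBW A B := by
  have hsA := msqrt_posDef hA
  have key := gen_trace (sA := msqrt A) (sM := msqrt (msqrt A * B * msqrt A))
    (pd_inv_mul hsA) (pd_mul_inv hsA)
  rw [msqrt_mul_self hA.posSemidef] at key
  simpa only [Tmap, crossBW] using key

lemma Tmap_inv_eq {A B : Mat} (hA : A.PosDef) (hB : B.PosDef) :
    B * (Tmap A B)⁻¹ = Tmap A B * A := by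
  have hc := Tmap_conj hA hB
  have hTpd := Tmap_posDef hA hB
  generalize hT : Tmap A B = T at *
  rw [← hc, Matrix.mul_assoc, pd_mul_inv hTpd, Matrix.mul_one]

lemma Tmap_inv_conj {A B : Mat} (hA : A.PosDef) (hB : B.PosDef) :
    (Tmap A B)⁻¹ * B * (Tmap A B)⁻¹ = A := by
  have hc := Tmap_conj hA hB
  have hTpd := Tmap_posDef hA hB
  generalize hT : Tmap A B = T at *
  have e1 : ∀ X : Mat, T⁻¹ * (T * X) = X := fun X => by
    rw [← Matrix.mul_assoc, pd_inv_mul hTpd, Matrix.one_mul]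
  rw [← hc]
  simp only [Matrix.mul_assoc, e1, pd_mul_inv hTpd, Matrix.mul_one]

lemma Tmap_inv_trace {A B : Mat} (hA : A.PosDef) (hB : B.PosDef) :
    (B * (Tmap A B)⁻¹).trace = crossBW A B := by
  rw [Tmap_inv_eq hA hB, Matrix.trace_mul_comm, Tmap_trace hA hB]

/-- the exact first-order expansion of `W2sq` at the base point `A` -/
lemma W2sq_ident {A B : Mat} (hA : A.PosDef) (hB : B.PosDef) : W2sq A B
    = (A * (1 - Tmap A B)).trace + (B * (1 - (Tmap A B)⁻¹)).trace := by
  rw [W2sq_expand, Matrix.mul_sub, Matrix.mul_sub, Matrix.trace_sub, Matrix.trace_sub,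
    Matrix.mul_one, Matrix.mul_one, Tmap_trace hA hB, Tmap_inv_trace hA hB]
  ring
private lemma gen_orth {X sA : Mat} (hherm : sA⁻¹ᴴ = sA⁻¹) (h1 : sA⁻¹ * sA = 1)
    (h2 : sA * sA⁻¹ = 1) (h : Xᴴ * X = sA * sA) : (X * sA⁻¹)ᴴ * (X * sA⁻¹) = 1 := by
  rw [Matrix.conjTranspose_mul, hherm]
  calc sA⁻¹ * Xᴴ * (X * sA⁻¹) = sA⁻¹ * ((Xᴴ * X) * sA⁻¹) := by simp only [Matrix.mul_assoc]
  _ = sA⁻¹ * (sA * (sA * sA⁻¹)) := by rw [h, Matrix.mul_assoc]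
  _ = 1 := by rw [h2, Matrix.mul_one, h1]

private lemma gen_orth_mul {U V : Mat} (hU : Uᴴ * U = 1) (hV : Vᴴ * V = 1) :
    (U * V)ᴴ * (U * V) = 1 := by
  rw [Matrix.conjTranspose_mul]
  calc Vᴴ * Uᴴ * (U * V) = Vᴴ * ((Uᴴ * U) * V) := by simp only [Matrix.mul_assoc]
  _ = 1 := by rw [hU, Matrix.one_mul, hV]

/-- orthogonal-contraction bound : `tr(V S) ≤ tr S` for `V` orthogonal, `S` psd. -/
private lemma trace_orth_mul_psd_le {V Sm : Mat} (hV : Vᴴ * V = 1) (hSm : Sm.PosSemidef) :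
    (V * Sm).trace ≤ Sm.trace := by
  have hsS2 : msqrt Sm * msqrt Sm = Sm := msqrt_mul_self hSm
  have hsSH : (msqrt Sm)ᴴ = msqrt Sm := msqrt_herm hSm
  have hCS := trace_CS (V * msqrt Sm)ᴴ (msqrt Sm)
  rw [Matrix.conjTranspose_conjTranspose] at hCS
  have e1 : V * msqrt Sm * msqrt Sm = V * Sm := by rw [Matrix.mul_assoc, hsS2]
  have e2 : (V * msqrt Sm * (V * msqrt Sm)ᴴ).trace = Sm.trace := by
    rw [Matrix.trace_mul_comm, Matrix.conjTranspose_mul, hsSH]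
    have h4 : msqrt Sm * Vᴴ * (V * msqrt Sm) = Sm := by
      calc msqrt Sm * Vᴴ * (V * msqrt Sm) = msqrt Sm * ((Vᴴ * V) * msqrt Sm) := by
            simp only [Matrix.mul_assoc]
      _ = Sm := by rw [hV, Matrix.one_mul, hsS2]
    rw [h4]
  rw [e1, e2, hsSH, hsS2] at hCS
  have hnn : 0 ≤ Sm.trace := trace_psd_nonneg hSm
  calc (V * Sm).trace ≤ |(V * Sm).trace| := le_abs_self _
  _ = Real.sqrt ((V * Sm).trace ^ 2) := (Real.sqrt_sq_eq_abs _).symm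
  _ ≤ Real.sqrt (Sm.trace * Sm.trace) := Real.sqrt_le_sqrt hCS
  _ = Sm.trace := Real.sqrt_mul_self hnn

/-- Duality: for any factorizations `A = PᴴP`, `B = QᴴQ`, `tr(PᴴQ) ≤ tr((A^½BA^½)^½)`. -/
lemma trace_le_cross {P Q A B : Mat} (hA : A.PosDef) (hB : B.PosDef)
    (hP : Pᴴ * P = A) (hQ : Qᴴ * Q = B) : (Pᴴ * Q).trace ≤ crossBW A B := by
  have hsA := msqrt_posDef hA
  have hsB := msqrt_posDef hB
  have hsAH := msqrt_herm hA.posSemidef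
  have hsBH := msqrt_herm hB.posSemidef
  have hsA2 := msqrt_mul_self hA.posSemidef
  have hsB2 := msqrt_mul_self hB.posSemidef
  have hMpd : (msqrt A * B * msqrt A).PosDef := inner_posDef hA hB
  have hSpd : (msqrt (msqrt A * B * msqrt A)).PosDef := msqrt_posDef hMpd
  have hS2 := msqrt_mul_self hMpd.posSemidef
  simp only [crossBW]
  set sA := msqrt A
  set sB := msqrt B
  set Sm := msqrt (sA * B * sA)
  set O1 := P * sA⁻¹ with hO1def
  set O2 := Q * sB⁻¹ with hO2def
  set Wm := (sB * sA) * Sm⁻¹ with hWmdef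
  set V := O1ᴴ * O2 * Wm with hVdef
  have hO1 : O1ᴴ * O1 = 1 :=
    gen_orth (pd_inv_herm hsA) (pd_inv_mul hsA) (pd_mul_inv hsA) (hP.trans hsA2.symm)
  have hO2 : O2ᴴ * O2 = 1 :=
    gen_orth (pd_inv_herm hsB) (pd_inv_mul hsB) (pd_mul_inv hsB) (hQ.trans hsB2.symm)
  have hCsq : (sB * sA)ᴴ * (sB * sA) = Sm * Sm := by
    rw [Matrix.conjTranspose_mul, hsAH, hsBH, hS2]
    calc sA * sB * (sB * sA) = sA * ((sB * sB) * sA) := by simp only [Matrix.mul_assoc]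
    _ = sA * B * sA := by rw [hsB2, Matrix.mul_assoc]
  have hWm : Wmᴴ * Wm = 1 :=
    gen_orth (pd_inv_herm hSpd) (pd_inv_mul hSpd) (pd_mul_inv hSpd) hCsq
  have hO1' : (O1ᴴ)ᴴ * O1ᴴ = 1 := by
    rw [Matrix.conjTranspose_conjTranspose]
    exact mul_eq_one_comm.mp hO1
  have hV : Vᴴ * V = 1 := gen_orth_mul (gen_orth_mul hO1' hO2) hWm
  have hPO : P = O1 * sA := by
    rw [hO1def, Matrix.mul_assoc, pd_inv_mul hsA, Matrix.mul_one]
  have hQO : Q = O2 * sB := by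
    rw [hO2def, Matrix.mul_assoc, pd_inv_mul hsB, Matrix.mul_one]
  have hCW : Wm * Sm = sB * sA := by
    rw [hWmdef, Matrix.mul_assoc, pd_inv_mul hSpd, Matrix.mul_one]
  have htr : (Pᴴ * Q).trace = (V * Sm).trace := by
    have h1 : Pᴴ * Q = sA * (O1ᴴ * (O2 * sB)) := by
      conv_lhs => rw [hPO, hQO]
      rw [Matrix.conjTranspose_mul, hsAH]
      simp only [Matrix.mul_assoc]
    have h2 : O1ᴴ * (O2 * sB) * sA = V * Sm := by
      have h3 : O1ᴴ * (O2 * sB) * sA = O1ᴴ * (O2 * (sB * sA)) := by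
        simp only [Matrix.mul_assoc]
      rw [h3, ← hCW, hVdef]
      simp only [Matrix.mul_assoc]
    rw [h1, Matrix.trace_mul_comm, h2]
  rw [htr]
  exact trace_orth_mul_psd_le hV hSpd.posSemidef
/-- The key (strong-convexity-type) lower bound for `W2sq` against the linearization
at a base point `A`. -/
lemma key_lemma {A B₀ C : Mat} (hA : A.PosDef) (hB : B₀.PosDef) (hC : C.PosDef)
    {α : ℝ} (hα : 0 ≤ α) (hRα : (Tmap A B₀ - α • 1).PosSemidef) :
    (C * (1 - Tmap A B₀)).trace + (B₀ * (1 - (Tmap A B₀)⁻¹)).trace + α * W2sq C A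
      ≤ W2sq C B₀ := by
  have hRpd := Tmap_posDef hA hB
  have hRinvconj := Tmap_inv_conj hA hB
  have hTcpd := Tmap_posDef hC hB
  have hTcherm := Tmap_herm hC hB
  have hTcconj := Tmap_conj hC hB
  have hTctr : (C * Tmap C B₀).trace = crossBW C B₀ := Tmap_trace hC hB
  have hWCB : W2sq C B₀ = C.trace + B₀.trace - 2 * crossBW C B₀ := W2sq_expand C B₀
  have hWCA : W2sq C A = C.trace + A.trace - 2 * crossBW C A := W2sq_expand C A
  generalize hR : Tmap A B₀ = R at *
  generalize hTcdef : Tmap C B₀ = Tc at *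
  have hCherm : Cᴴ = C := hC.isHermitian
  have hRinv_herm : (R⁻¹)ᴴ = R⁻¹ := pd_inv_herm hRpd
  have hRux : R * R⁻¹ = 1 := pd_mul_inv hRpd
  have hRxu : R⁻¹ * R = 1 := pd_inv_mul hRpd
  set K := R⁻¹ * Tc with hK
  have hKH : Kᴴ = Tc * R⁻¹ := by
    rw [hK, Matrix.conjTranspose_mul, hRinv_herm, hTcherm]
  have hKCK : K * C * Kᴴ = A := by
    rw [hKH, hK]
    calc R⁻¹ * Tc * C * (Tc * R⁻¹) = R⁻¹ * (Tc * C * Tc) * R⁻¹ := by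
          simp only [Matrix.mul_assoc]
    _ = A := by rw [hTcconj]; exact hRinvconj
  -- the conjugated matrix and its psd-ness
  have hQCQpsd : ((1 - K) * C * (1 - K)ᴴ).PosSemidef :=
    hC.posSemidef.mul_mul_conjTranspose_same (1 - K)
  -- trace identity for the conjugated matrix
  have htrKC : (K * C).trace = (C * Kᴴ).trace := by
    have h5 : K * C = (C * Kᴴ)ᴴ := by
      rw [Matrix.conjTranspose_mul, Matrix.conjTranspose_conjTranspose, hCherm]
    rw [h5, Matrix.trace_conjTranspose, star_trivial]
  have hQCQtr : ((1 - K) * C * (1 - K)ᴴ).trace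
      = C.trace + A.trace - 2 * (C * Kᴴ).trace := by
    have hexp : (1 - K) * C * (1 - K)ᴴ = C - C * Kᴴ - K * C + K * C * Kᴴ := by
      rw [Matrix.conjTranspose_sub, Matrix.conjTranspose_one]
      noncomm_ring
    rw [hexp, hKCK, Matrix.trace_add, Matrix.trace_sub, Matrix.trace_sub, htrKC]
    ring
  -- trace identity for g = tr(R * QCQᴴ)
  have hRK : R * K = Tc := by rw [hK, ← Matrix.mul_assoc, hRux, Matrix.one_mul]
  have hgtr : (R * ((1 - K) * C * (1 - K)ᴴ)).trace
      = (C * R).trace - 2 * (C * Tc).trace + (B₀ * R⁻¹).trace := by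
    have hexp : R * ((1 - K) * C * (1 - K)ᴴ)
        = R * C - R * C * Kᴴ - (R * K) * C + (R * K) * (C * Kᴴ) := by
      rw [Matrix.conjTranspose_sub, Matrix.conjTranspose_one]
      noncomm_ring
    have ht1 : (R * C * Kᴴ).trace = (C * Tc).trace := by
      rw [Matrix.trace_mul_comm, hKH]
      have h6 : Tc * R⁻¹ * (R * C) = Tc * C := by
        calc Tc * R⁻¹ * (R * C) = Tc * ((R⁻¹ * R) * C) := by simp only [Matrix.mul_assoc]
        _ = Tc * C := by rw [hRxu, Matrix.one_mul]
      rw [h6, Matrix.trace_mul_comm]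
    have ht2 : (Tc * (C * Kᴴ)).trace = (B₀ * R⁻¹).trace := by
      have h7 : Tc * (C * Kᴴ) = B₀ * R⁻¹ := by
        rw [hKH]
        calc Tc * (C * (Tc * R⁻¹)) = Tc * C * Tc * R⁻¹ := by simp only [Matrix.mul_assoc]
        _ = B₀ * R⁻¹ := by rw [hTcconj]
      rw [h7]
    have ht3 : (Tc * C).trace = (C * Tc).trace := Matrix.trace_mul_comm _ _
    have ht4 : (R * C).trace = (C * R).trace := Matrix.trace_mul_comm _ _
    rw [hexp, hRK, Matrix.trace_add, Matrix.trace_sub, Matrix.trace_sub, ht1, ht2, ht3, ht4]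
    ring
  -- lower bound for g
  have hglb : α * ((1 - K) * C * (1 - K)ᴴ).trace
      ≤ (R * ((1 - K) * C * (1 - K)ᴴ)).trace := by
    have h0 : 0 ≤ ((R - α • 1) * ((1 - K) * C * (1 - K)ᴴ)).trace :=
      trace_mul_psd_nonneg hRα hQCQpsd
    rw [Matrix.sub_mul, Matrix.trace_sub, Matrix.smul_mul, Matrix.one_mul,
      Matrix.trace_smul, smul_eq_mul] at h0
    linarith
  -- lower bound for tr(QCQᴴ) via duality
  have hcross : (C * Kᴴ).trace ≤ crossBW C A := by
    have hPfac : (msqrt C)ᴴ * msqrt C = C := by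
      rw [msqrt_herm hC.posSemidef, msqrt_mul_self hC.posSemidef]
    have hQfac : (msqrt C * Kᴴ)ᴴ * (msqrt C * Kᴴ) = A := by
      rw [Matrix.conjTranspose_mul, Matrix.conjTranspose_conjTranspose,
        msqrt_herm hC.posSemidef]
      calc K * msqrt C * (msqrt C * Kᴴ) = K * (msqrt C * msqrt C) * Kᴴ := by
            simp only [Matrix.mul_assoc]
      _ = A := by rw [msqrt_mul_self hC.posSemidef, hKCK]
    have := trace_le_cross hC hA hPfac hQfac
    have h8 : (msqrt C)ᴴ * (msqrt C * Kᴴ) = C * Kᴴ := by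
      rw [msqrt_herm hC.posSemidef, ← Matrix.mul_assoc, msqrt_mul_self hC.posSemidef]
    rwa [h8] at this
  -- beat everything together
  have hQCQW : W2sq C A ≤ ((1 - K) * C * (1 - K)ᴴ).trace := by
    rw [hQCQtr, hWCA]; linarith
  have hgW : α * W2sq C A ≤ (R * ((1 - K) * C * (1 - K)ᴴ)).trace :=
    le_trans (mul_le_mul_of_nonneg_left hQCQW hα) hglb
  have e1 : (C * (1 - R)).trace = C.trace - (C * R).trace := by
    rw [Matrix.mul_sub, Matrix.trace_sub, Matrix.mul_one]
  have e2 : (B₀ * (1 - R⁻¹)).trace = B₀.trace - (B₀ * R⁻¹).trace := by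
    rw [Matrix.mul_sub, Matrix.trace_sub, Matrix.mul_one]
  rw [e1, e2, hWCB, ← hTctr]
  linarith
/-! Quadratic form utilities over ℝ. -/

lemma qf_pair (A B : Mat) (x : Fin d → ℝ) :
    (A *ᵥ x) ⬝ᵥ (B *ᵥ x) = x ⬝ᵥ ((Aᴴ * B) *ᵥ x) := by
  rw [← Matrix.mulVec_mulVec, Matrix.dotProduct_mulVec x Aᴴ (B *ᵥ x),
    ← Matrix.mulVec_transpose, Matrix.conjTranspose_eq_transpose_of_trivial,
    Matrix.transpose_transpose]

lemma qf_smul_one (c : ℝ) (x : Fin d → ℝ) :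
    x ⬝ᵥ ((c • (1 : Mat)) *ᵥ x) = c * (x ⬝ᵥ x) := by
  rw [Matrix.smul_mulVec, Matrix.one_mulVec, dotProduct_smul, smul_eq_mul]

lemma psd_qf {M : Mat} (h : M.PosSemidef) (x : Fin d → ℝ) : 0 ≤ x ⬝ᵥ (M *ᵥ x) := by
  simpa using h.dotProduct_mulVec_nonneg x

lemma psd_upper {M : Mat} {u : ℝ} (h : (u • (1 : Mat) - M).PosSemidef) (x : Fin d → ℝ) :
    x ⬝ᵥ (M *ᵥ x) ≤ u * (x ⬝ᵥ x) := by
  have h0 := psd_qf h x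
  rw [Matrix.sub_mulVec, dotProduct_sub, qf_smul_one] at h0
  linarith

lemma psd_lower {M : Mat} {l : ℝ} (h : (M - l • (1 : Mat)).PosSemidef) (x : Fin d → ℝ) :
    l * (x ⬝ᵥ x) ≤ x ⬝ᵥ (M *ᵥ x) := by
  have h0 := psd_qf h x
  rw [Matrix.sub_mulVec, dotProduct_sub, qf_smul_one] at h0
  linarith

lemma dot_CS (x y : Fin d → ℝ) : (x ⬝ᵥ y) ^ 2 ≤ (x ⬝ᵥ x) * (y ⬝ᵥ y) := by
  simpa [dotProduct, sq] using
    Finset.sum_mul_sq_le_sq_mul_sq Finset.univ x y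

lemma dot_nonneg (x : Fin d → ℝ) : 0 ≤ x ⬝ᵥ x :=
  Finset.sum_nonneg fun i _ => mul_self_nonneg _
/-! Stationarity of the minimizer. -/

lemma mulVec_sq_le (E : Mat) (x : Fin d → ℝ) :
    (E *ᵥ x) ⬝ᵥ (E *ᵥ x) ≤ (Eᴴ * E).trace * (x ⬝ᵥ x) := by
  rw [trace_conjTranspose_mul_self, Fintype.sum_prod_type, Finset.sum_mul]
  have h1 : (E *ᵥ x) ⬝ᵥ (E *ᵥ x) = ∑ i : Fin d, (E i ⬝ᵥ x) ^ 2 := by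
    simp [dotProduct, Matrix.mulVec, sq]
  rw [h1]
  refine Finset.sum_le_sum fun i _ => ?_
  calc (E i ⬝ᵥ x) ^ 2 ≤ (E i ⬝ᵥ E i) * (x ⬝ᵥ x) := dot_CS _ _
  _ = (∑ j : Fin d, E i j ^ 2) * (x ⬝ᵥ x) := by simp [dotProduct, sq]

lemma pd_conj {M X : Mat} (hM : M.PosDef) (hXh : Xᴴ = X) (hXdet : X.det ≠ 0) :
    (X * M * X).PosDef := by
  have hpsd : (X * M * X).PosSemidef := by
    have := hM.posSemidef.mul_mul_conjTranspose_same X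
    rwa [hXh] at this
  refine posDef_of_posSemidef_det_ne_zero hpsd ?_
  rw [Matrix.det_mul, Matrix.det_mul]
  exact mul_ne_zero (mul_ne_zero hXdet hM.det_pos.ne') hXdet

lemma one_sub_smul_posDef {E : Mat} (hE : Eᴴ = E) {ε : ℝ} (hε0 : 0 < ε)
    (hsmall : ε * Real.sqrt ((Eᴴ * E).trace) < 1) : (1 - ε • E).PosDef := by
  refine posDef_iff_dotProduct_mulVec.mpr ⟨?_, ?_⟩
  · show (1 - ε • E)ᴴ = 1 - ε • E
    rw [Matrix.conjTranspose_sub, Matrix.conjTranspose_one, Matrix.conjTranspose_smul,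
      star_trivial, hE]
  · intro x hx
    have hxx : 0 < x ⬝ᵥ x := by
      rcases lt_or_eq_of_le (dot_nonneg x) with h | h
      · exact h
      · exact absurd (dotProduct_self_eq_zero.mp h.symm) hx
    have hEx : x ⬝ᵥ (E *ᵥ x) ≤ Real.sqrt ((Eᴴ * E).trace) * (x ⬝ᵥ x) := by
      have h1 : (x ⬝ᵥ (E *ᵥ x)) ^ 2 ≤ ((Eᴴ * E).trace * (x ⬝ᵥ x)) * (x ⬝ᵥ x) := by
        calc (x ⬝ᵥ (E *ᵥ x)) ^ 2 ≤ (x ⬝ᵥ x) * ((E *ᵥ x) ⬝ᵥ (E *ᵥ x)) := dot_CS _ _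
        _ ≤ (x ⬝ᵥ x) * ((Eᴴ * E).trace * (x ⬝ᵥ x)) :=
            mul_le_mul_of_nonneg_left (mulVec_sq_le E x) (dot_nonneg x)
        _ = ((Eᴴ * E).trace * (x ⬝ᵥ x)) * (x ⬝ᵥ x) := by ring
      have htrnn : 0 ≤ (Eᴴ * E).trace := trace_conjTranspose_mul_self_nonneg E
      calc x ⬝ᵥ (E *ᵥ x) ≤ |x ⬝ᵥ (E *ᵥ x)| := le_abs_self _
      _ = Real.sqrt ((x ⬝ᵥ (E *ᵥ x)) ^ 2) := (Real.sqrt_sq_eq_abs _).symm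
      _ ≤ Real.sqrt (((Eᴴ * E).trace * (x ⬝ᵥ x)) * (x ⬝ᵥ x)) := Real.sqrt_le_sqrt h1
      _ = Real.sqrt ((Eᴴ * E).trace) * Real.sqrt (x ⬝ᵥ x) * Real.sqrt (x ⬝ᵥ x) := by
          rw [Real.sqrt_mul (by positivity), Real.sqrt_mul htrnn]
      _ = Real.sqrt ((Eᴴ * E).trace) * (x ⬝ᵥ x) := by
          rw [mul_assoc, Real.mul_self_sqrt (dot_nonneg x)]
    have key : x ⬝ᵥ ((1 - ε • E) *ᵥ x) = x ⬝ᵥ x - ε * (x ⬝ᵥ (E *ᵥ x)) := by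
      rw [Matrix.sub_mulVec, dotProduct_sub, Matrix.smul_mulVec,
        dotProduct_smul, smul_eq_mul, Matrix.one_mulVec]
    have : ε * (x ⬝ᵥ (E *ᵥ x)) ≤ ε * (Real.sqrt ((Eᴴ * E).trace) * (x ⬝ᵥ x)) :=
      mul_le_mul_of_nonneg_left hEx hε0.le
    have h2 : ε * Real.sqrt ((Eᴴ * E).trace) * (x ⬝ᵥ x) < 1 * (x ⬝ᵥ x) :=
      mul_lt_mul_of_pos_right hsmall hxx
    simp only [star_trivial]
    rw [key]
    nlinarith
/-- First-order optimality: at the minimizer the transport maps average to the identity. -/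
lemma stationarity {N : ℕ} (hN : 0 < N) (Ss : Fin N → Mat) (hSspd : ∀ i, (Ss i).PosDef)
    (Sstar : Mat) (hstar : Sstar.PosDef)
    (hmin : ∀ S : Mat, S.PosDef → Fbar Ss Sstar ≤ Fbar Ss S) :
    ∑ i, Tmap Sstar (Ss i) = (N : ℝ) • (1 : Mat) := by
  classical
  have hNne : (N : ℝ) ≠ 0 := Nat.cast_ne_zero.mpr hN.ne'
  have hNpos : (0:ℝ) < N := Nat.cast_pos.mpr hN
  set E : Mat := 1 - (N : ℝ)⁻¹ • ∑ i, Tmap Sstar (Ss i) with hEdef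
  have hEherm : Eᴴ = E := by
    rw [hEdef, Matrix.conjTranspose_sub, Matrix.conjTranspose_one, Matrix.conjTranspose_smul,
      star_trivial, Matrix.conjTranspose_sum]
    have : ∀ i ∈ Finset.univ, (Tmap Sstar (Ss i))ᴴ = Tmap Sstar (Ss i) :=
      fun i _ => Tmap_herm hstar (hSspd i)
    rw [Finset.sum_congr rfl this]
  have hRsum : ∑ i, Tmap Sstar (Ss i) = (N : ℝ) • (1 : Mat) - (N : ℝ) • E := by
    rw [hEdef, smul_sub, smul_smul, mul_inv_cancel₀ hNne, one_smul, sub_sub_cancel]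
  suffices hE0 : E = 0 by
    rw [hE0, smul_zero, sub_zero] at hRsum; exact hRsum
  set c := Real.sqrt ((Eᴴ * E).trace) with hc
  have hcnn : 0 ≤ c := Real.sqrt_nonneg _
  set ε := (1 : ℝ) / (2 * (c + 1)) with hε
  have hε0 : 0 < ε := by rw [hε]; positivity
  have hε1 : ε ≤ 1 := by
    rw [hε, div_le_one (by positivity)]; nlinarith
  have hεc : ε * c < 1 := by
    rw [hε, div_mul_eq_mul_div, div_lt_one (by positivity)]; nlinarith
  have hX : (1 - ε • E).PosDef := one_sub_smul_posDef hEherm hε0 hεc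
  set X : Mat := 1 - ε • E with hXdef
  have hXherm : Xᴴ = X := hX.isHermitian
  have hXSX : (X * Sstar * X).PosDef := pd_conj hstar hXherm hX.det_pos.ne'
  have hsH := msqrt_herm hstar.posSemidef
  have hs2 := msqrt_mul_self hstar.posSemidef
  -- upper bound on each W2sq from the explicit coupling
  have hup : ∀ i, W2sq (X * Sstar * X) (Ss i)
      ≤ (X * Sstar * X).trace + (Ss i).trace
        - 2 * ((X * Sstar) * Tmap Sstar (Ss i)).trace := by
    intro i
    rw [W2sq_expand]
    have hPfac : (msqrt Sstar * X)ᴴ * (msqrt Sstar * X) = X * Sstar * X := by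
      rw [Matrix.conjTranspose_mul, hXherm, hsH]
      calc X * msqrt Sstar * (msqrt Sstar * X)
          = X * (msqrt Sstar * msqrt Sstar) * X := by simp only [Matrix.mul_assoc]
      _ = X * Sstar * X := by rw [hs2]
    have hQfac : (msqrt Sstar * Tmap Sstar (Ss i))ᴴ * (msqrt Sstar * Tmap Sstar (Ss i))
        = Ss i := by
      rw [Matrix.conjTranspose_mul, hsH, Tmap_herm hstar (hSspd i)]
      calc Tmap Sstar (Ss i) * msqrt Sstar * (msqrt Sstar * Tmap Sstar (Ss i))
          = Tmap Sstar (Ss i) * (msqrt Sstar * msqrt Sstar) * Tmap Sstar (Ss i) := by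
            simp only [Matrix.mul_assoc]
      _ = Ss i := by rw [hs2]; exact Tmap_conj hstar (hSspd i)
    have hcr := trace_le_cross hXSX (hSspd i) hPfac hQfac
    have hsh : (msqrt Sstar * X)ᴴ * (msqrt Sstar * Tmap Sstar (Ss i))
        = (X * Sstar) * Tmap Sstar (Ss i) := by
      rw [Matrix.conjTranspose_mul, hXherm, hsH]
      calc X * msqrt Sstar * (msqrt Sstar * Tmap Sstar (Ss i))
          = X * (msqrt Sstar * msqrt Sstar) * Tmap Sstar (Ss i) := by
            simp only [Matrix.mul_assoc]
      _ = _ := by rw [hs2]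
    rw [hsh] at hcr
    linarith
  have hlow : ∀ i, W2sq Sstar (Ss i)
      = Sstar.trace + (Ss i).trace - 2 * (Sstar * Tmap Sstar (Ss i)).trace := by
    intro i; rw [W2sq_expand, Tmap_trace hstar (hSspd i)]
  -- scalar quantities
  set a := (E * Sstar).trace with ha
  set τ := (E * Sstar * E).trace with hτdef
  -- expansions of perturbed products
  have hXS : X * Sstar = Sstar - ε • (E * Sstar) := by
    rw [hXdef, Matrix.sub_mul, Matrix.one_mul, Matrix.smul_mul]
  have hXStr : (X * Sstar).trace = Sstar.trace - ε * a := by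
    rw [hXS, Matrix.trace_sub, Matrix.trace_smul, smul_eq_mul, ha]
  have hXSEtr : ((X * Sstar) * E).trace = a - ε * τ := by
    rw [hXS, Matrix.sub_mul, Matrix.smul_mul, Matrix.trace_sub, Matrix.trace_smul, smul_eq_mul]
    rw [Matrix.trace_mul_comm Sstar E, ha, hτdef]
  -- trace of the perturbed point
  have hSe : (X * Sstar * X).trace = Sstar.trace - 2 * ε * a + ε ^ 2 * τ := by
    have hexp : X * Sstar * X = X * Sstar - ε • ((X * Sstar) * E) := by
      nth_rewrite 2 [hXdef]
      rw [Matrix.mul_sub, Matrix.mul_one, Matrix.mul_smul]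
    rw [hexp, Matrix.trace_sub, Matrix.trace_smul, smul_eq_mul, hXStr, hXSEtr]
    ring
  have hsum1 : ∑ i, ((X * Sstar) * Tmap Sstar (Ss i)).trace
      = (N:ℝ) * (Sstar.trace - ε * a) - (N:ℝ) * (a - ε * τ) := by
    rw [← Matrix.trace_sum, ← Matrix.mul_sum, hRsum, Matrix.mul_sub, Matrix.mul_smul,
      Matrix.mul_smul, Matrix.mul_one, Matrix.trace_sub, Matrix.trace_smul, Matrix.trace_smul,
      smul_eq_mul, smul_eq_mul, hXStr, hXSEtr]
  have hsum2 : ∑ i, (Sstar * Tmap Sstar (Ss i)).trace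
      = (N:ℝ) * Sstar.trace - (N:ℝ) * a := by
    rw [← Matrix.trace_sum, ← Matrix.mul_sum, hRsum, Matrix.mul_sub, Matrix.mul_smul,
      Matrix.mul_smul, Matrix.mul_one, Matrix.trace_sub, Matrix.trace_smul, Matrix.trace_smul,
      smul_eq_mul, smul_eq_mul, Matrix.trace_mul_comm Sstar E, ha]
  -- aggregate
  have hmin' := hmin _ hXSX
  rw [Fbar, Fbar] at hmin'
  have hfac : (0:ℝ) < 1 / (2 * N) := by positivity
  have hSW : ∑ i, W2sq Sstar (Ss i) ≤ ∑ i, W2sq (X * Sstar * X) (Ss i) :=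
    le_of_mul_le_mul_left hmin' hfac
  have hSW1 : ∑ i, W2sq (X * Sstar * X) (Ss i)
      ≤ (N:ℝ) * (X * Sstar * X).trace + (∑ i, (Ss i).trace)
        - 2 * ∑ i, ((X * Sstar) * Tmap Sstar (Ss i)).trace := by
    calc ∑ i, W2sq (X * Sstar * X) (Ss i)
        ≤ ∑ i, ((X * Sstar * X).trace + (Ss i).trace
            - 2 * ((X * Sstar) * Tmap Sstar (Ss i)).trace) :=
          Finset.sum_le_sum fun i _ => hup i
    _ = _ := by
        rw [Finset.sum_sub_distrib, Finset.sum_add_distrib, Finset.sum_const,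
          Finset.card_univ, Fintype.card_fin, nsmul_eq_mul, ← Finset.mul_sum]
  have hSW0 : ∑ i, W2sq Sstar (Ss i)
      = (N:ℝ) * Sstar.trace + (∑ i, (Ss i).trace)
        - 2 * ∑ i, (Sstar * Tmap Sstar (Ss i)).trace := by
    calc ∑ i, W2sq Sstar (Ss i)
        = ∑ i, (Sstar.trace + (Ss i).trace - 2 * (Sstar * Tmap Sstar (Ss i)).trace) :=
          Finset.sum_congr rfl fun i _ => hlow i
    _ = _ := by
        rw [Finset.sum_sub_distrib, Finset.sum_add_distrib, Finset.sum_const,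
          Finset.card_univ, Fintype.card_fin, nsmul_eq_mul, ← Finset.mul_sum]
  -- extract τ ≤ 0
  rw [hsum1, hSe] at hSW1
  rw [hsum2] at hSW0
  have hineq := le_trans (le_of_eq hSW0.symm) (le_trans hSW hSW1)
  have hkey : 0 ≤ ((N:ℝ) * (ε ^ 2 - 2 * ε)) * τ := by nlinarith [hineq]
  have hee : ε * ε ≤ ε := mul_le_of_le_one_left hε0.le hε1
  have h2 : ε ^ 2 - 2 * ε < 0 := by nlinarith
  have hC : (N:ℝ) * (ε ^ 2 - 2 * ε) < 0 := mul_neg_of_pos_of_neg hNpos h2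
  have hτle : τ ≤ 0 := by
    by_contra h'
    push_neg at h'
    exact absurd hkey (not_le.mpr (mul_neg_of_neg_of_pos hC h'))
  -- conclude E = 0
  have hτform : τ = ((msqrt Sstar * E)ᴴ * (msqrt Sstar * E)).trace := by
    rw [Matrix.conjTranspose_mul, hsH, hEherm, hτdef]
    congr 1
    calc E * Sstar * E = E * (msqrt Sstar * msqrt Sstar) * E := by rw [hs2]
    _ = E * msqrt Sstar * (msqrt Sstar * E) := by simp only [Matrix.mul_assoc]
  have hzero : msqrt Sstar * E = 0 :=
    eq_zero_of_trace_conjTranspose_mul_self _ (by rw [← hτform]; exact hτle)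
  have : (msqrt Sstar)⁻¹ * (msqrt Sstar * E) = E := by
    rw [← Matrix.mul_assoc, pd_inv_mul (msqrt_posDef hstar), Matrix.one_mul]
  rw [hzero, Matrix.mul_zero] at this
  exact this.symm
/-! Eigenvalue bounds at the minimizer. -/

lemma le_sqrt_of_sq_le {a b : ℝ} (h : a ^ 2 ≤ b) : a ≤ Real.sqrt b := by
  calc a ≤ |a| := le_abs_self a
  _ = Real.sqrt (a ^ 2) := (Real.sqrt_sq_eq_abs a).symm
  _ ≤ Real.sqrt b := Real.sqrt_le_sqrt h

lemma sum_mulVec {ι : Type*} (s : Finset ι) (A : ι → Mat) (x : Fin d → ℝ) :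
    (∑ i ∈ s, A i) *ᵥ x = ∑ i ∈ s, (A i *ᵥ x) := by
  ext j
  simp only [Matrix.mulVec, dotProduct, Finset.sum_apply, Matrix.sum_apply,
    Finset.sum_mul]
  rw [Finset.sum_comm]

lemma dot_sum {ι : Type*} (s : Finset ι) (v : ι → (Fin d → ℝ)) (x : Fin d → ℝ) :
    x ⬝ᵥ (∑ i ∈ s, v i) = ∑ i ∈ s, x ⬝ᵥ v i := by
  simp only [dotProduct, Finset.sum_apply, Finset.mul_sum]
  rw [Finset.sum_comm]

private lemma gen_sandwich {sA M : Mat} (h1 : sA⁻¹ * sA = 1) (h2 : sA * sA⁻¹ = 1) :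
    sA * (sA⁻¹ * M * sA⁻¹) * sA = M := by
  calc sA * (sA⁻¹ * M * sA⁻¹) * sA = (sA * sA⁻¹) * (M * (sA⁻¹ * sA)) := by
        simp only [Matrix.mul_assoc]
  _ = M := by rw [h1, h2, Matrix.one_mul, Matrix.mul_one]

lemma msqrt_Tmap_msqrt {A B : Mat} (hA : A.PosDef) :
    msqrt A * Tmap A B * msqrt A = msqrt (msqrt A * B * msqrt A) := by
  rw [Tmap]
  exact gen_sandwich (pd_inv_mul (msqrt_posDef hA)) (pd_mul_inv (msqrt_posDef hA))

/-- At the minimizer, `Sstar ⪯ u•1`. -/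
lemma star_upper {N : ℕ} (hN : 0 < N) {u : ℝ} (hu : 0 < u) (Ss : Fin N → Mat)
    (hSspd : ∀ i, (Ss i).PosDef) (hSsu : ∀ i, (u • (1 : Mat) - Ss i).PosSemidef)
    (Sstar : Mat) (hstar : Sstar.PosDef)
    (hRsum : ∑ i, Tmap Sstar (Ss i) = (N : ℝ) • (1 : Mat)) :
    (u • (1 : Mat) - Sstar).PosSemidef := by
  have hNpos : (0:ℝ) < N := Nat.cast_pos.mpr hN
  have hsH := msqrt_herm hstar.posSemidef
  have hs2 := msqrt_mul_self hstar.posSemidef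
  have hkey : ∑ i, msqrt Sstar * Tmap Sstar (Ss i) * msqrt Sstar = (N:ℝ) • Sstar := by
    have h0 : ∑ i, msqrt Sstar * Tmap Sstar (Ss i) * msqrt Sstar
        = msqrt Sstar * (∑ i, Tmap Sstar (Ss i)) * msqrt Sstar := by
      rw [Matrix.mul_sum, Finset.sum_mul]
    rw [h0, hRsum, Matrix.mul_smul, Matrix.smul_mul, Matrix.mul_one, hs2]
  refine posSemidef_iff_dotProduct_mulVec.mpr ⟨?_, ?_⟩
  · show (u • (1:Mat) - Sstar)ᴴ = u • (1:Mat) - Sstar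
    rw [Matrix.conjTranspose_sub, Matrix.conjTranspose_smul, Matrix.conjTranspose_one,
      star_trivial, hstar.isHermitian.eq]
  · intro x
    simp only [star_trivial]
    rw [Matrix.sub_mulVec, dotProduct_sub, qf_smul_one]
    set v := x ⬝ᵥ (Sstar *ᵥ x) with hv
    have hvnn : 0 ≤ v := psd_qf hstar.posSemidef x
    have hxx : 0 ≤ x ⬝ᵥ x := dot_nonneg x
    have hterm : ∀ i : Fin N, x ⬝ᵥ ((msqrt Sstar * Tmap Sstar (Ss i) * msqrt Sstar) *ᵥ x)
        ≤ Real.sqrt ((x ⬝ᵥ x) * (u * v)) := by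
      intro i
      rw [msqrt_Tmap_msqrt hstar]
      have hSiH := msqrt_herm (inner_posDef hstar (hSspd i)).posSemidef
      have hSi2 := msqrt_mul_self (inner_posDef hstar (hSspd i)).posSemidef
      refine le_sqrt_of_sq_le ?_
      set Si := msqrt (msqrt Sstar * Ss i * msqrt Sstar) with hSi
      have h2 : (Si *ᵥ x) ⬝ᵥ (Si *ᵥ x) = x ⬝ᵥ ((msqrt Sstar * Ss i * msqrt Sstar) *ᵥ x) := by
        rw [qf_pair, hSiH, hSi2]
      have h3 : x ⬝ᵥ ((msqrt Sstar * Ss i * msqrt Sstar) *ᵥ x) ≤ u * v := by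
        have h4 : x ⬝ᵥ ((msqrt Sstar * Ss i * msqrt Sstar) *ᵥ x)
            = (msqrt Sstar *ᵥ x) ⬝ᵥ (Ss i *ᵥ (msqrt Sstar *ᵥ x)) := by
          have hqp := qf_pair (msqrt Sstar) (Ss i * msqrt Sstar) x
          rw [hsH] at hqp
          rw [Matrix.mul_assoc, ← hqp, ← Matrix.mulVec_mulVec]
        have h5 : (msqrt Sstar *ᵥ x) ⬝ᵥ (msqrt Sstar *ᵥ x) = v := by
          rw [qf_pair, hsH, hs2]
        rw [h4]
        calc (msqrt Sstar *ᵥ x) ⬝ᵥ (Ss i *ᵥ (msqrt Sstar *ᵥ x))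
            ≤ u * ((msqrt Sstar *ᵥ x) ⬝ᵥ (msqrt Sstar *ᵥ x)) := psd_upper (hSsu i) _
        _ = u * v := by rw [h5]
      calc (x ⬝ᵥ (Si *ᵥ x)) ^ 2 ≤ (x ⬝ᵥ x) * ((Si *ᵥ x) ⬝ᵥ (Si *ᵥ x)) := dot_CS _ _
      _ ≤ (x ⬝ᵥ x) * (u * v) := by rw [h2]; exact mul_le_mul_of_nonneg_left h3 hxx
    have hNv : (N:ℝ) * v = ∑ i, x ⬝ᵥ ((msqrt Sstar * Tmap Sstar (Ss i) * msqrt Sstar) *ᵥ x) := by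
      rw [← dot_sum, ← sum_mulVec, hkey, Matrix.smul_mulVec, dotProduct_smul,
        smul_eq_mul]
    have hsumle : (N:ℝ) * v ≤ (N:ℝ) * Real.sqrt ((x ⬝ᵥ x) * (u * v)) := by
      rw [hNv]
      calc ∑ i, x ⬝ᵥ ((msqrt Sstar * Tmap Sstar (Ss i) * msqrt Sstar) *ᵥ x)
          ≤ ∑ _i : Fin N, Real.sqrt ((x ⬝ᵥ x) * (u * v)) :=
            Finset.sum_le_sum fun i _ => hterm i
      _ = (N:ℝ) * Real.sqrt ((x ⬝ᵥ x) * (u * v)) := by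
          rw [Finset.sum_const, Finset.card_univ, Fintype.card_fin, nsmul_eq_mul]
    have hvle : v ≤ Real.sqrt ((x ⬝ᵥ x) * (u * v)) := le_of_mul_le_mul_left hsumle hNpos
    have hv2 : v ^ 2 ≤ (x ⬝ᵥ x) * (u * v) :=
      (Real.le_sqrt hvnn (by positivity)).mp hvle
    rcases eq_or_lt_of_le hvnn with h0 | h0
    · nlinarith
    · nlinarith

/-- `T_{A→B} ⪰ √(l/u) • 1` when `B ⪰ l•1` and `A ⪯ u•1`. -/
lemma Tmap_lower {A B : Mat} (hA : A.PosDef) (hB : B.PosDef) {l u : ℝ} (hl : 0 < l)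
    (hlu : l ≤ u) (hBl : (B - l • (1 : Mat)).PosSemidef)
    (hAu : (u • (1 : Mat) - A).PosSemidef) :
    (Tmap A B - Real.sqrt (l / u) • (1 : Mat)).PosSemidef := by
  have hu : 0 < u := lt_of_lt_of_le hl hlu
  have hRpd := Tmap_posDef hA hB
  have hRherm := Tmap_herm hA hB
  have hRic := Tmap_inv_conj hA hB
  generalize hRdef : Tmap A B = R at *
  have hRinvherm : (R⁻¹)ᴴ = R⁻¹ := pd_inv_herm hRpd
  have hsR := msqrt_posDef hRpd
  have hsRH := msqrt_herm hRpd.posSemidef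
  have hsR2 := msqrt_mul_self hRpd.posSemidef
  refine posSemidef_iff_dotProduct_mulVec.mpr ⟨?_, ?_⟩
  · show (R - Real.sqrt (l/u) • (1:Mat))ᴴ = R - Real.sqrt (l/u) • (1:Mat)
    rw [Matrix.conjTranspose_sub, Matrix.conjTranspose_smul, Matrix.conjTranspose_one,
      star_trivial, hRherm]
  · intro x
    simp only [star_trivial]
    rw [Matrix.sub_mulVec, dotProduct_sub, qf_smul_one]
    set w := x ⬝ᵥ x with hw
    have hwnn : 0 ≤ w := dot_nonneg x
    set r := x ⬝ᵥ (R *ᵥ x) with hr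
    have hrnn : 0 ≤ r := psd_qf hRpd.posSemidef x
    set ri := x ⬝ᵥ (R⁻¹ *ᵥ x) with hri
    have hrinn : 0 ≤ ri := psd_qf hRpd.posSemidef.inv x
    -- step 1 : (R⁻¹x)⬝(R⁻¹x) ≤ (u/l) * w
    have hf1 : (R⁻¹ *ᵥ x) ⬝ᵥ (R⁻¹ *ᵥ x) ≤ (u / l) * w := by
      have h1 : l * ((R⁻¹ *ᵥ x) ⬝ᵥ (R⁻¹ *ᵥ x)) ≤ (R⁻¹ *ᵥ x) ⬝ᵥ (B *ᵥ (R⁻¹ *ᵥ x)) :=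
        psd_lower hBl _
      have h2 : (R⁻¹ *ᵥ x) ⬝ᵥ (B *ᵥ (R⁻¹ *ᵥ x)) = x ⬝ᵥ (A *ᵥ x) := by
        rw [Matrix.mulVec_mulVec, qf_pair R⁻¹ (B * R⁻¹) x, hRinvherm, ← Matrix.mul_assoc, hRic]
      have h3 : x ⬝ᵥ (A *ᵥ x) ≤ u * w := psd_upper hAu x
      rw [h2] at h1
      rw [div_mul_eq_mul_div, le_div_iff₀ hl]
      nlinarith
    -- step 2 : ri ≤ √(u/l) * w
    have hf2 : ri ≤ Real.sqrt (u / l) * w := by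
      have h1 : ri ^ 2 ≤ w * ((u / l) * w) :=
        le_trans (dot_CS x (R⁻¹ *ᵥ x)) (mul_le_mul_of_nonneg_left hf1 hwnn)
      have h2 : ri ≤ Real.sqrt (w * ((u / l) * w)) := le_sqrt_of_sq_le h1
      have h3 : Real.sqrt (w * ((u / l) * w)) = Real.sqrt (u / l) * w := by
        rw [show w * ((u / l) * w) = (u / l) * (w * w) by ring, Real.sqrt_mul (by positivity),
          Real.sqrt_mul_self hwnn]
      rwa [h3] at h2
    -- step 3 : w² ≤ r * ri
    have hf3 : w ^ 2 ≤ r * ri := by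
      have ha : (msqrt R *ᵥ x) ⬝ᵥ ((msqrt R)⁻¹ *ᵥ x) = w := by
        rw [qf_pair, hsRH, pd_mul_inv hsR, Matrix.one_mulVec, hw]
      have hb : (msqrt R *ᵥ x) ⬝ᵥ (msqrt R *ᵥ x) = r := by
        rw [qf_pair, hsRH, hsR2, hr]
      have hc : ((msqrt R)⁻¹ *ᵥ x) ⬝ᵥ ((msqrt R)⁻¹ *ᵥ x) = ri := by
        rw [qf_pair, pd_inv_herm hsR]
        have : (msqrt R)⁻¹ * (msqrt R)⁻¹ = R⁻¹ := by
          rw [← Matrix.mul_inv_rev, hsR2]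
        rw [this, hri]
      calc w ^ 2 = ((msqrt R *ᵥ x) ⬝ᵥ ((msqrt R)⁻¹ *ᵥ x)) ^ 2 := by rw [ha]
      _ ≤ ((msqrt R *ᵥ x) ⬝ᵥ (msqrt R *ᵥ x)) * (((msqrt R)⁻¹ *ᵥ x) ⬝ᵥ ((msqrt R)⁻¹ *ᵥ x)) :=
          dot_CS _ _
      _ = r * ri := by rw [hb, hc]
    -- combine
    have hq0 : 0 < Real.sqrt (u / l) := Real.sqrt_pos.mpr (by positivity)
    have hr2 : w ^ 2 ≤ r * (Real.sqrt (u / l) * w) :=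
      le_trans hf3 (mul_le_mul_of_nonneg_left hf2 hrnn)
    have hlu' : Real.sqrt (l / u) = (Real.sqrt (u / l))⁻¹ := by
      rw [show (l / u) = (u / l)⁻¹ from (inv_div u l).symm, Real.sqrt_inv]
    rw [hlu']
    rcases eq_or_lt_of_le hwnn with h0 | h0
    · rw [← h0, mul_zero, sub_zero]
      exact hrnn
    · have hwle : w ≤ r * Real.sqrt (u / l) := by nlinarith
      have : w / Real.sqrt (u / l) ≤ r := (div_le_iff₀ hq0).mpr hwle
      rw [inv_mul_eq_div]
      linarith
lemma trace_conj_psd {M G : Mat} (hM : M.PosSemidef) (hG : Gᴴ = G) :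
    0 ≤ (G * M * G).trace := by
  have h : G * M * G = Gᴴ * M * G := by rw [hG]
  rw [h]
  exact trace_psd_nonneg (hM.conjTranspose_mul_mul_same G)

lemma gradF_herm {N : ℕ} (Ss : Fin N → Mat) (S : Mat) (hSpd : S.PosDef)
    (hSspd : ∀ i, (Ss i).PosDef) : (gradF Ss S)ᴴ = gradF Ss S := by
  rw [gradF, Matrix.conjTranspose_sub, Matrix.conjTranspose_one, Matrix.conjTranspose_smul,
    star_trivial, Matrix.conjTranspose_sum]
  have : ∀ i ∈ Finset.univ, (Tmap S (Ss i))ᴴ = Tmap S (Ss i) :=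
    fun i _ => Tmap_herm hSpd (hSspd i)
  rw [Finset.sum_congr rfl this]
end PLaux

set_option maxHeartbeats 1000000 in
/-- Polyak–Łojasiewicz inequality for the Bures–Wasserstein barycenter functional. -/
theorem PL_inequality {d N : ℕ} (l u : ℝ) (hl : 0 < l) (hlu : l ≤ u)
    (Ss : Fin N → Matrix (Fin d) (Fin d) ℝ) (hSs : ∀ i, Ss i ∈ Kset l u)
    (Sstar : Matrix (Fin d) (Fin d) ℝ) (hstar : Sstar.PosDef)
    (hmin : ∀ S : Matrix (Fin d) (Fin d) ℝ, S.PosDef → Fbar Ss Sstar ≤ Fbar Ss S)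
    (S : Matrix (Fin d) (Fin d) ℝ) (hS : S ∈ Kset l u) :
    Fbar Ss S - Fbar Ss Sstar ≤ 2 * (u / l) ^ ((3 : ℝ) / 2) * normAtSq (gradF Ss S) S := by
  have hu : 0 < u := lt_of_lt_of_le hl hlu
  have hulnn : (0:ℝ) ≤ u / l := by positivity
  have hrpownn : (0:ℝ) ≤ (u / l) ^ ((3:ℝ)/2) := Real.rpow_nonneg hulnn _
  obtain ⟨hSpd, hSl, hSu⟩ := hS
  have hSspd : ∀ i, (Ss i).PosDef := fun i => (hSs i).1
  have hSsl : ∀ i, (Ss i - l • (1 : Matrix (Fin d) (Fin d) ℝ)).PosSemidef := fun i => (hSs i).2.1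
  have hSsu : ∀ i, (u • (1 : Matrix (Fin d) (Fin d) ℝ) - Ss i).PosSemidef := fun i => (hSs i).2.2
  have hGherm := gradF_herm Ss S hSpd hSspd
  have hG2nn : 0 ≤ normAtSq (gradF Ss S) S := by
    rw [normAtSq]
    exact trace_conj_psd hSpd.posSemidef hGherm
  rcases Nat.eq_zero_or_pos N with hN0 | hN
  · subst hN0
    have hF : ∀ X : Matrix (Fin d) (Fin d) ℝ, Fbar Ss X = 0 := by
      intro X
      rw [Fbar]
      simp
    rw [hF, hF, sub_zero]
    have := mul_nonneg (mul_nonneg (by norm_num : (0:ℝ) ≤ 2) hrpownn) hG2nn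
    linarith
  -- main case
  have hNne : (N : ℝ) ≠ 0 := Nat.cast_ne_zero.mpr hN.ne'
  have hNpos : (0:ℝ) < N := Nat.cast_pos.mpr hN
  have hRsum := stationarity hN Ss hSspd Sstar hstar hmin
  have hstaru := star_upper hN hu Ss hSspd hSsu Sstar hstar hRsum
  set δ := Fbar Ss S - Fbar Ss Sstar with hδ
  have hδnn : 0 ≤ δ := by
    have := hmin S hSpd
    rw [hδ]; linarith
  set G2 := normAtSq (gradF Ss S) S with hG2
  set W2v := W2sq S Sstar with hW2v
  set q := Real.sqrt (u / l) with hq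
  have hq1 : 1 ≤ q := by
    rw [hq]
    rw [show (1:ℝ) = Real.sqrt 1 from (Real.sqrt_one).symm]
    exact Real.sqrt_le_sqrt ((le_div_iff₀ hl).mpr (by linarith))
  have hq0 : 0 < q := lt_of_lt_of_le one_pos hq1
  set α := Real.sqrt (l / u) with hα
  have hαq : α = q⁻¹ := by
    rw [hα, hq, show (l / u) = (u / l)⁻¹ from (inv_div u l).symm, Real.sqrt_inv]
  have hα0 : 0 < α := by rw [hαq]; positivity
  -- nonnegativity of W2v via the transport representation
  have hTherm := Tmap_herm hSpd hstar
  have hTconj := Tmap_conj hSpd hstar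
  have hTtr := Tmap_trace hSpd hstar
  have h1T : ((1 : Matrix (Fin d) (Fin d) ℝ) - Tmap S Sstar)ᴴ = 1 - Tmap S Sstar := by
    rw [Matrix.conjTranspose_sub, Matrix.conjTranspose_one, hTherm]
  have hWtr : ((1 - Tmap S Sstar) * S * (1 - Tmap S Sstar)).trace = W2v := by
    have hexp : (1 - Tmap S Sstar) * S * (1 - Tmap S Sstar)
        = S - Tmap S Sstar * S - S * Tmap S Sstar + Tmap S Sstar * S * Tmap S Sstar := by
      noncomm_ring
    rw [hexp, hTconj, Matrix.trace_add, Matrix.trace_sub, Matrix.trace_sub,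
      Matrix.trace_mul_comm (Tmap S Sstar) S, hTtr, hW2v, W2sq_expand]
    ring
  have hWnn : 0 ≤ W2v := by
    rw [← hWtr]
    exact trace_conj_psd hSpd.posSemidef h1T
  set Wr := Real.sqrt W2v with hWr
  set G := Real.sqrt G2 with hG
  have hWr2 : Wr ^ 2 = W2v := Real.sq_sqrt hWnn
  have hG2' : G ^ 2 = G2 := Real.sq_sqrt hG2nn
  -- (II) : α * W2v ≤ 2 δ
  have hsum_eq : (∑ i, W2sq S (Ss i)) - (∑ i, W2sq Sstar (Ss i)) = (2 * N) * δ := by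
    rw [hδ, Fbar, Fbar]
    field_simp
  have hII : α * W2v ≤ 2 * δ := by
    have hper : ∀ i, W2sq Sstar (Ss i)
        + (((S - Sstar) * (1 - Tmap Sstar (Ss i))).trace + α * W2v) ≤ W2sq S (Ss i) := by
      intro i
      have hkey := key_lemma hstar (hSspd i) hSpd hα0.le
        (Tmap_lower hstar (hSspd i) hl hlu (hSsl i) hstaru)
      have hident := W2sq_ident hstar (hSspd i)
      have hsubtr : ((S - Sstar) * (1 - Tmap Sstar (Ss i))).trace
          = (S * (1 - Tmap Sstar (Ss i))).trace - (Sstar * (1 - Tmap Sstar (Ss i))).trace := by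
        rw [Matrix.sub_mul, Matrix.trace_sub]
      rw [hsubtr, hW2v]
      linarith
    have hsum0 : ∑ i, ((S - Sstar) * (1 - Tmap Sstar (Ss i))).trace = 0 := by
      rw [← Matrix.trace_sum, ← Matrix.mul_sum]
      have hz : ∑ i : Fin N, ((1 : Matrix (Fin d) (Fin d) ℝ) - Tmap Sstar (Ss i)) = 0 := by
        rw [Finset.sum_sub_distrib, hRsum, Finset.sum_const, Finset.card_univ,
          Fintype.card_fin, ← Nat.cast_smul_eq_nsmul ℝ, sub_self]
      rw [hz, Matrix.mul_zero, Matrix.trace_zero]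
    have hsum := Finset.sum_le_sum (fun i (_ : i ∈ Finset.univ) => hper i)
    rw [Finset.sum_add_distrib, Finset.sum_add_distrib, hsum0, Finset.sum_const,
      Finset.card_univ, Fintype.card_fin, nsmul_eq_mul] at hsum
    have : (N:ℝ) * (α * W2v) ≤ (2 * N) * δ := by linarith [hsum_eq, hsum]
    have h2 : (N:ℝ) * (α * W2v) ≤ (N:ℝ) * (2 * δ) := by linarith
    exact le_of_mul_le_mul_left h2 hNpos
  -- (I) : 2 δ ≤ tr((S - Sstar) * gradF)
  have hI : 2 * δ ≤ ((S - Sstar) * gradF Ss S).trace := by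
    have hper : ∀ i, W2sq S (Ss i) + ((Sstar - S) * (1 - Tmap S (Ss i))).trace
        ≤ W2sq Sstar (Ss i) := by
      intro i
      have hR0 : (Tmap S (Ss i) - (0:ℝ) • (1 : Matrix (Fin d) (Fin d) ℝ)).PosSemidef := by
        rw [zero_smul, sub_zero]
        exact (Tmap_posDef hSpd (hSspd i)).posSemidef
      have hkey := key_lemma hSpd (hSspd i) hstar le_rfl hR0
      rw [zero_mul, add_zero] at hkey
      have hident := W2sq_ident hSpd (hSspd i)
      have hsubtr : ((Sstar - S) * (1 - Tmap S (Ss i))).trace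
          = (Sstar * (1 - Tmap S (Ss i))).trace - (S * (1 - Tmap S (Ss i))).trace := by
        rw [Matrix.sub_mul, Matrix.trace_sub]
      rw [hsubtr]
      linarith
    have hgradsum : ∑ i : Fin N, ((1 : Matrix (Fin d) (Fin d) ℝ) - Tmap S (Ss i))
        = (N:ℝ) • gradF Ss S := by
      rw [gradF, smul_sub, smul_smul, mul_inv_cancel₀ hNne, one_smul,
        Finset.sum_sub_distrib, Finset.sum_const, Finset.card_univ, Fintype.card_fin,
        ← Nat.cast_smul_eq_nsmul ℝ]
    have hsum0 : ∑ i, ((Sstar - S) * (1 - Tmap S (Ss i))).trace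
        = (N:ℝ) * ((Sstar - S) * gradF Ss S).trace := by
      rw [← Matrix.trace_sum, ← Matrix.mul_sum, hgradsum, Matrix.mul_smul,
        Matrix.trace_smul, smul_eq_mul]
    have hsum := Finset.sum_le_sum (fun i (_ : i ∈ Finset.univ) => hper i)
    rw [Finset.sum_add_distrib, hsum0] at hsum
    have hneg : ((Sstar - S) * gradF Ss S).trace = -((S - Sstar) * gradF Ss S).trace := by
      rw [show Sstar - S = -(S - Sstar) from (neg_sub S Sstar).symm, Matrix.neg_mul,
        Matrix.trace_neg]
    rw [hneg] at hsum
    have : (2 * (N:ℝ)) * δ ≤ (N:ℝ) * ((S - Sstar) * gradF Ss S).trace := by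
      linarith [hsum_eq]
    have h2 : (N:ℝ) * (2 * δ) ≤ (N:ℝ) * ((S - Sstar) * gradF Ss S).trace := by linarith
    exact le_of_mul_le_mul_left h2 hNpos
  -- (M6) : tr((S - Sstar) * gradF) ≤ 2 q G Wr
  have hM6 : ((S - Sstar) * gradF Ss S).trace ≤ 2 * q * G * Wr := by
    set T := Tmap S Sstar with hT
    set F := gradF Ss S with hF
    have hs2 := msqrt_mul_self hSpd.posSemidef
    have hsH := msqrt_herm hSpd.posSemidef
    have hsplit : (1 - T) * S * F + T * (S * ((1 - T) * F)) = (S - Sstar) * F := by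
      have : (1 - T) * S * F + T * (S * ((1 - T) * F)) = (S - T * S * T) * F := by
        noncomm_ring
      rw [this, hT, hTconj]
    -- first term
    have hb1 : ((1 - T) * S * F).trace ≤ G * Wr := by
      have hCS := trace_CS (msqrt S * (1 - T)) (msqrt S * F)
      have e0 : (msqrt S * (1 - T))ᴴ * (msqrt S * F) = (1 - T) * S * F := by
        rw [Matrix.conjTranspose_mul, hsH, h1T]
        calc (1 - T) * msqrt S * (msqrt S * F) = (1 - T) * (msqrt S * msqrt S) * F := by
              simp only [Matrix.mul_assoc]
        _ = _ := by rw [hs2]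
      have e1 : (msqrt S * (1 - T))ᴴ * (msqrt S * (1 - T)) = (1 - T) * S * (1 - T) := by
        rw [Matrix.conjTranspose_mul, hsH, h1T]
        calc (1 - T) * msqrt S * (msqrt S * (1 - T))
            = (1 - T) * (msqrt S * msqrt S) * (1 - T) := by simp only [Matrix.mul_assoc]
        _ = _ := by rw [hs2]
      have e2 : (msqrt S * F)ᴴ * (msqrt S * F) = F * S * F := by
        rw [Matrix.conjTranspose_mul, hsH, hGherm]
        calc F * msqrt S * (msqrt S * F) = F * (msqrt S * msqrt S) * F := by
              simp only [Matrix.mul_assoc]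
        _ = _ := by rw [hs2]
      rw [e0, e1, e2, hWtr] at hCS
      have hG2eq : (F * S * F).trace = G2 := by rw [hG2, normAtSq]
      rw [hG2eq] at hCS
      have := le_sqrt_of_sq_le hCS
      rwa [Real.sqrt_mul hWnn, ← hWr, ← hG, mul_comm Wr G] at this
    -- second term
    have hb2 : (T * (S * ((1 - T) * F))).trace ≤ q * G * Wr := by
      have hcyc : (T * (S * ((1 - T) * F))).trace = ((F * T) * S * (1 - T)).trace := by
        have h1 : T * (S * ((1 - T) * F)) = (T * S * (1 - T)) * F := by
          simp only [Matrix.mul_assoc]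
        rw [h1, Matrix.trace_mul_comm]
        congr 1
        simp only [Matrix.mul_assoc]
      have hCS := trace_CS (msqrt S * (T * F)) (msqrt S * (1 - T))
      have e0 : (msqrt S * (T * F))ᴴ * (msqrt S * (1 - T)) = (F * T) * S * (1 - T) := by
        rw [Matrix.conjTranspose_mul, hsH, Matrix.conjTranspose_mul, hTherm, hGherm]
        calc F * T * msqrt S * (msqrt S * (1 - T))
            = F * T * (msqrt S * msqrt S) * (1 - T) := by simp only [Matrix.mul_assoc]
        _ = _ := by rw [hs2]
      have e1 : (msqrt S * (T * F))ᴴ * (msqrt S * (T * F)) = F * Sstar * F := by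
        rw [Matrix.conjTranspose_mul, hsH, Matrix.conjTranspose_mul, hTherm, hGherm]
        calc F * T * msqrt S * (msqrt S * (T * F))
            = F * (T * (msqrt S * msqrt S) * T) * F := by simp only [Matrix.mul_assoc]
        _ = F * Sstar * F := by rw [hs2, hTconj]
      have e2 : (msqrt S * (1 - T))ᴴ * (msqrt S * (1 - T)) = (1 - T) * S * (1 - T) := by
        rw [Matrix.conjTranspose_mul, hsH, h1T]
        calc (1 - T) * msqrt S * (msqrt S * (1 - T))
            = (1 - T) * (msqrt S * msqrt S) * (1 - T) := by simp only [Matrix.mul_assoc]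
        _ = _ := by rw [hs2]
      rw [e0, e1, e2, hWtr] at hCS
      -- bound tr(F Sstar F) by (u/l) G2
      have htFF : 0 ≤ (F * F).trace := by
        have : F * F = Fᴴ * F := by rw [hGherm]
        rw [this]; exact trace_conjTranspose_mul_self_nonneg F
      have hs1 : (F * Sstar * F).trace ≤ u * (F * F).trace := by
        have h0 : 0 ≤ (F * (u • (1 : Matrix (Fin d) (Fin d) ℝ) - Sstar) * F).trace :=
          trace_conj_psd hstaru hGherm
        have hexp : F * (u • (1 : Matrix (Fin d) (Fin d) ℝ) - Sstar) * F
            = u • (F * F) - F * Sstar * F := by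
          rw [Matrix.mul_sub, Matrix.sub_mul, Matrix.mul_smul, Matrix.mul_one,
            Matrix.smul_mul]
        rw [hexp, Matrix.trace_sub, Matrix.trace_smul, smul_eq_mul] at h0
        linarith
      have hs2' : l * (F * F).trace ≤ G2 := by
        have h0 : 0 ≤ (F * (S - l • (1 : Matrix (Fin d) (Fin d) ℝ)) * F).trace :=
          trace_conj_psd hSl hGherm
        have hexp : F * (S - l • (1 : Matrix (Fin d) (Fin d) ℝ)) * F
            = F * S * F - l • (F * F) := by
          rw [Matrix.mul_sub, Matrix.sub_mul, Matrix.mul_smul, Matrix.mul_one,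
            Matrix.smul_mul]
        rw [hexp, Matrix.trace_sub, Matrix.trace_smul, smul_eq_mul] at h0
        have hG2eq : (F * S * F).trace = G2 := by rw [hG2, normAtSq]
        linarith [hG2eq ▸ h0]
      have hFSF : (F * Sstar * F).trace ≤ (u / l) * G2 := by
        calc (F * Sstar * F).trace ≤ u * (F * F).trace := hs1
        _ = (u / l) * (l * (F * F).trace) := by field_simp
        _ ≤ (u / l) * G2 := mul_le_mul_of_nonneg_left hs2' hulnn
      have hCS2 : ((F * T) * S * (1 - T)).trace ^ 2 ≤ ((u / l) * G2) * W2v :=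
        le_trans hCS (mul_le_mul_of_nonneg_right hFSF hWnn)
      have := le_sqrt_of_sq_le hCS2
      calc (T * (S * ((1 - T) * F))).trace = ((F * T) * S * (1 - T)).trace := hcyc
      _ ≤ Real.sqrt (((u / l) * G2) * W2v) := this
      _ = q * G * Wr := by
          rw [Real.sqrt_mul (by positivity), Real.sqrt_mul hulnn, ← hq, ← hG, ← hWr,
            mul_assoc]
    calc ((S - Sstar) * gradF Ss S).trace
        = ((1 - T) * S * F).trace + (T * (S * ((1 - T) * F))).trace := by
          rw [← hsplit, Matrix.trace_add, hF]
    _ ≤ G * Wr + q * G * Wr := add_le_add hb1 hb2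
    _ ≤ 2 * q * G * Wr := by nlinarith [mul_nonneg (Real.sqrt_nonneg G2) (Real.sqrt_nonneg W2v), hq1]
  -- final arithmetic
  have hδle : δ ≤ q * G * Wr := by
    calc δ ≤ ((S - Sstar) * gradF Ss S).trace / 2 := by linarith
    _ ≤ (2 * q * G * Wr) / 2 := by linarith
    _ = q * G * Wr := by ring
  have hWq : W2v ≤ 2 * δ * q := by
    have h0 : α * W2v ≤ 2 * δ := hII
    have h1 : q * (α * W2v) ≤ q * (2 * δ) := mul_le_mul_of_nonneg_left h0 hq0.le
    have h2 : q * α = 1 := by rw [hαq, mul_inv_cancel₀ hq0.ne']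
    calc W2v = (q * α) * W2v := by rw [h2, one_mul]
    _ = q * (α * W2v) := by ring
    _ ≤ q * (2 * δ) := h1
    _ = 2 * δ * q := by ring
  have hGnn : 0 ≤ G := Real.sqrt_nonneg _
  have hWrnn : 0 ≤ Wr := Real.sqrt_nonneg _
  have hsq : δ ^ 2 ≤ q ^ 2 * G2 * W2v := by
    have := mul_self_le_mul_self hδnn hδle
    calc δ ^ 2 = δ * δ := sq δ
    _ ≤ (q * G * Wr) * (q * G * Wr) := this
    _ = q ^ 2 * G ^ 2 * Wr ^ 2 := by ring
    _ = q ^ 2 * G2 * W2v := by rw [hG2', hWr2]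
  have hchain : δ ^ 2 ≤ (2 * q ^ 3 * G2) * δ := by
    calc δ ^ 2 ≤ q ^ 2 * G2 * W2v := hsq
    _ ≤ q ^ 2 * G2 * (2 * δ * q) :=
        mul_le_mul_of_nonneg_left hWq (by positivity)
    _ = (2 * q ^ 3 * G2) * δ := by ring
  have hrpow : (u / l) ^ ((3:ℝ)/2) = q ^ 3 := by
    rw [hq, show (3:ℝ)/2 = (1/2) * 3 by norm_num, Real.rpow_mul hulnn,
      ← Real.sqrt_eq_rpow]
    rw [show ((3:ℝ):ℝ) = ((3:ℕ):ℝ) by norm_num]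
    exact Real.rpow_natCast _ 3
  rw [hrpow]
  rcases eq_or_lt_of_le hδnn with h0 | h0
  · rw [← h0]
    positivity
  · nlinarith [hchain, h0]
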